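/- Let f ∈ ℚ[x_0,x_1,…,x_N] be homogeneous of degree n > 0 and let 0 ≤ i ≤ N. If the polynomial f|_{x_i=0}, obtained from f by substituting x_i = 0, is irreducible in the polynomial ring ℚ[x_0,…,x̂_i,…,x_N] in the remaining N variables (x_i omitted), then f is irreducible in ℚ[x_0,x_1,…,x_N]. -/

import Mathlib

open MvPolynomial

/-- The "homogenization bookkeeping" map sending `x_j ↦ x_j * t` where `t` is a new
polynomial variable recording total degree. -/
noncomputable def Thom (σ R : Type*) [CommSemiring R] :
    MvPolynomial σ R →ₐ[R] Polynomial (MvPolynomial σ R) :=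
  MvPolynomial.aeval (fun j => Polynomial.C (MvPolynomial.X j) * Polynomial.X)

lemma Thom_monomial {σ R : Type*} [CommSemiring R] (d : σ →₀ ℕ) (r : R) :
    Thom σ R (monomial d r) = Polynomial.monomial d.degree (monomial d r) := by
  have key : (d.prod fun j k => (Polynomial.C (X j : MvPolynomial σ R) * Polynomial.X) ^ k)
      = Polynomial.C (d.prod fun j k => (X j : MvPolynomial σ R) ^ k) *
        Polynomial.X ^ d.degree := by
    rw [Finsupp.prod, Finsupp.prod, Finsupp.degree]
    simp_rw [mul_pow, ← Polynomial.C_pow]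
    rw [Finset.prod_mul_distrib, ← map_prod, Finset.prod_pow_eq_pow_sum]
    rfl
  rw [Thom, aeval_monomial, key, ← Polynomial.C_mul_X_pow_eq_monomial,
    MvPolynomial.monomial_eq, map_mul]
  rw [show algebraMap R (Polynomial (MvPolynomial σ R)) r = Polynomial.C (MvPolynomial.C r) by
    simp [Polynomial.algebraMap_apply, MvPolynomial.algebraMap_eq]]
  ring

lemma Thom_coeff {σ R : Type*} [CommSemiring R] (p : MvPolynomial σ R) (k : ℕ) :
    (Thom σ R p).coeff k = homogeneousComponent k p := by
  induction p using MvPolynomial.induction_on' with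
  | monomial d r =>
      rw [Thom_monomial, Polynomial.coeff_monomial,
        homogeneousComponent_of_mem
          ((mem_homogeneousSubmodule _ _).2 (isHomogeneous_monomial r rfl))]
      simp [eq_comm]
  | add p q hp hq => simp [map_add, hp, hq]

lemma Thom_eval_one {σ R : Type*} [CommSemiring R] (p : MvPolynomial σ R) :
    Polynomial.eval 1 (Thom σ R p) = p := by
  induction p using MvPolynomial.induction_on' with
  | monomial d r => rw [Thom_monomial]; simp
  | add p q hp hq => simp [hp, hq]

lemma Thom_of_isHomogeneous {σ R : Type*} [CommSemiring R] {p : MvPolynomial σ R} {n : ℕ}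
    (hp : p.IsHomogeneous n) : Thom σ R p = Polynomial.monomial n p := by
  ext k
  rw [Thom_coeff, Polynomial.coeff_monomial,
    homogeneousComponent_of_mem ((mem_homogeneousSubmodule _ _).2 hp)]
  simp [eq_comm]

/-- In a domain, a divisor of a nonzero homogeneous polynomial is homogeneous. -/
lemma isHomogeneous_of_mul {σ R : Type*} [CommRing R] [IsDomain R]
    {a b : MvPolynomial σ R} {n : ℕ} (h : (a * b).IsHomogeneous n)
    (ha : a ≠ 0) (hb : b ≠ 0) :
    a.IsHomogeneous ((Thom σ R a).natDegree) := by
  classical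
  have hab : a * b ≠ 0 := mul_ne_zero ha hb
  have hTa : Thom σ R a ≠ 0 := fun h0 => ha (by
    rw [← Thom_eval_one (R := R) a, h0, Polynomial.eval_zero])
  have hTb : Thom σ R b ≠ 0 := fun h0 => hb (by
    rw [← Thom_eval_one (R := R) b, h0, Polynomial.eval_zero])
  have hmul : Thom σ R a * Thom σ R b = Polynomial.monomial n (a * b) := by
    rw [← map_mul, Thom_of_isHomogeneous h]
  have hdeg : (Thom σ R a).natDegree + (Thom σ R b).natDegree = n := by
    rw [← Polynomial.natDegree_mul hTa hTb, hmul, Polynomial.natDegree_monomial]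
    simp [hab]
  have htr : (Thom σ R a).natTrailingDegree + (Thom σ R b).natTrailingDegree = n := by
    rw [← Polynomial.natTrailingDegree_mul hTa hTb, hmul,
      Polynomial.natTrailingDegree_monomial hab]
  have h1 := Polynomial.natTrailingDegree_le_natDegree (Thom σ R a)
  have h2 := Polynomial.natTrailingDegree_le_natDegree (Thom σ R b)
  set m := (Thom σ R a).natDegree with hm
  have heq : (Thom σ R a).natTrailingDegree = m := by omega
  have hTam : Thom σ R a = Polynomial.monomial m ((Thom σ R a).coeff m) := by
    ext k
    rcases lt_trichotomy k m with hk | rfl | hk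
    · rw [Polynomial.coeff_monomial, if_neg (by omega),
        Polynomial.coeff_eq_zero_of_lt_natTrailingDegree (by omega)]
    · simp [Polynomial.coeff_monomial]
    · rw [Polynomial.coeff_monomial, if_neg (by omega),
        Polynomial.coeff_eq_zero_of_natDegree_lt hk]
  have ha' : a = homogeneousComponent m a := by
    conv_lhs => rw [← Thom_eval_one (R := R) a, hTam]
    rw [Thom_coeff]
    simp [Polynomial.eval_monomial]
  rw [ha']
  exact homogeneousComponent_isHomogeneous m a

/-- If `f ∈ ℚ[x_0,…,x_N]` is homogeneous of degree `n > 0` and the polynomial obtained by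
substituting `x_i = 0` is irreducible in the polynomial ring on the remaining variables
(indexed by `{j // j ≠ i}`), then `f` is irreducible. -/
theorem stmt3 {N n : ℕ} (f : MvPolynomial (Fin (N+1)) ℚ) (i : Fin (N+1))
    (hn : 0 < n) (hf : f.IsHomogeneous n)
    (hirr : Irreducible
      (MvPolynomial.aeval
        (fun j : Fin (N+1) =>
          if hj : j = i then (0 : MvPolynomial {j : Fin (N+1) // j ≠ i} ℚ)
          else MvPolynomial.X ⟨j, hj⟩)
        f)) :
    Irreducible f := by
  set g : Fin (N+1) → MvPolynomial {j : Fin (N+1) // j ≠ i} ℚ :=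
    fun j => if hj : j = i then 0 else MvPolynomial.X ⟨j, hj⟩ with hg
  have hgh : ∀ j, (g j).IsHomogeneous 1 := by
    intro j
    rw [hg]
    dsimp only
    split
    · exact isHomogeneous_zero _ _ _
    · exact isHomogeneous_X _ _
  have hf0 : f ≠ 0 := by
    rintro rfl
    rw [map_zero] at hirr
    exact not_irreducible_zero hirr
  have key : ∀ (c : MvPolynomial (Fin (N+1)) ℚ) (m : ℕ), c ≠ 0 → c.IsHomogeneous m →
      IsUnit (MvPolynomial.aeval g c) → IsUnit c := by
    intro c m hc hcm hu
    have hcg : (MvPolynomial.aeval g c).IsHomogeneous (1 * m) := hcm.aeval g hgh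
    have hm : m = 0 := by
      by_contra hm
      have h0 : coeff 0 (MvPolynomial.aeval g c) = 0 :=
        hcg.coeff_eq_zero (by simp only [map_zero]; omega)
      have hcu := hu.map (constantCoeff (σ := {j : Fin (N+1) // j ≠ i}) (R := ℚ))
      rw [show constantCoeff ((MvPolynomial.aeval g) c) = coeff 0 ((MvPolynomial.aeval g) c)
        from rfl, h0] at hcu
      exact not_isUnit_zero hcu
    subst hm
    have hc' : c = MvPolynomial.C (coeff 0 c) := by
      rw [← homogeneousComponent_zero,
        homogeneousComponent_of_mem ((mem_homogeneousSubmodule _ _).2 hcm), if_pos rfl]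
    have hc0 : coeff 0 c ≠ 0 := fun h => hc (by rw [hc', h, map_zero])
    rw [hc']
    exact (isUnit_iff_ne_zero.2 hc0).map (MvPolynomial.C : ℚ →+* _)
  constructor
  · intro hu
    exact hirr.not_isUnit (hu.map (MvPolynomial.aeval g))
  · intro a b hab
    have ha : a ≠ 0 := fun h => hf0 (by rw [hab, h, zero_mul])
    have hb : b ≠ 0 := fun h => hf0 (by rw [hab, h, mul_zero])
    have habh : (a * b).IsHomogeneous n := hab ▸ hf
    have hpa := isHomogeneous_of_mul habh ha hb
    have hqb := isHomogeneous_of_mul ((mul_comm a b) ▸ habh) hb ha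
    rcases hirr.isUnit_or_isUnit (by rw [hab, map_mul]) with h | h
    · exact Or.inl (key a _ ha hpa h)
    · exact Or.inr (key b _ hb hqb h)
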